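/- Let {X_k}_{k≥1} be a sequence of independent nonnegative random variables and (a_k)_{k≥1} a monotonically increasing sequence of reals with a_k/k → ∞. Suppose ∑_{k≥1} sup_{n≥1} P[X_n > a_k] < ∞ and E[X_{k₀}] = ∞ for some k₀. If {X*_k}_{k≥1} are i.i.d. nonnegative random variables with P[X*_k > x] = sup_{n≥1} P[X_n > x] for all x, then E[X*_1] = ∞, ∑_{k≥1} P[X*_k > a_k] < ∞, and P[∑_{k=1}^n X_k > a_n for infinitely many n] ≤ P[∑_{k=1}^n X*_k > a_n for infinitely many n]. -/

import Mathlib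

open MeasureTheory ProbabilityTheory Filter Real Set
open scoped ENNReal NNReal BigOperators Topology

lemma dom_Ici {μ ν : Measure ℝ} [IsProbabilityMeasure μ] [IsProbabilityMeasure ν]
    (h : ∀ x : ℝ, μ (Set.Ioi x) ≤ ν (Set.Ioi x)) (c : ℝ) : μ (Set.Ici c) ≤ ν (Set.Ici c) := by
  have hset : (⋂ n : ℕ, Set.Ioi (c - 1/(n+1))) = Set.Ici c := by
    ext x
    simp only [Set.mem_iInter, Set.mem_Ioi, Set.mem_Ici]
    constructor
    · intro hx
      by_contra hlt
      push_neg at hlt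
      obtain ⟨n, hn⟩ := exists_nat_one_div_lt (show (0:ℝ) < c - x by linarith)
      have := hx n
      linarith
    · intro hx n
      have : (0:ℝ) < 1/(n+1) := by positivity
      linarith
  have hanti : Antitone (fun n : ℕ => Set.Ioi (c - 1/(n+1))) := by
    intro m n hmn
    apply Set.Ioi_subset_Ioi
    have : (1:ℝ)/(n+1) ≤ 1/(m+1) := by
      apply one_div_le_one_div_of_le (by positivity)
      have := (Nat.cast_le (α := ℝ)).mpr hmn; linarith
    linarith
  calc μ (Set.Ici c) ≤ ⨅ n : ℕ, μ (Set.Ioi (c - 1/(n+1))) := by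
        apply le_iInf; intro n
        apply measure_mono
        rw [← hset]; exact Set.iInter_subset _ n
    _ ≤ ⨅ n : ℕ, ν (Set.Ioi (c - 1/(n+1))) := iInf_mono fun n => h _
    _ = ν (⋂ n : ℕ, Set.Ioi (c - 1/(n+1))) := by
        rw [hanti.measure_iInter (fun n => (measurableSet_Ioi).nullMeasurableSet)
          ⟨0, measure_ne_top ν _⟩]
    _ = ν (Set.Ici c) := by rw [hset]

lemma dom_upper {μ ν : Measure ℝ} [IsProbabilityMeasure μ] [IsProbabilityMeasure ν]
    (h : ∀ x : ℝ, μ (Set.Ioi x) ≤ ν (Set.Ioi x))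
    {U : Set ℝ} (hU : ∀ ⦃x y : ℝ⦄, x ≤ y → x ∈ U → y ∈ U) : μ U ≤ ν U := by
  rcases Set.eq_empty_or_nonempty U with rfl | hne
  · simp
  by_cases hbdd : BddBelow U
  · set c := sInf U with hc
    have hsub1 : Set.Ioi c ⊆ U := by
      intro x hx
      obtain ⟨u, huU, hux⟩ := (csInf_lt_iff hbdd hne).mp hx
      exact hU hux.le huU
    have hsub2 : U ⊆ Set.Ici c := fun x hx => csInf_le hbdd hx
    by_cases hcU : c ∈ U
    · have hEq : U = Set.Ici c := Set.Subset.antisymm hsub2 (fun x hx => hU hx hcU)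
      rw [hEq]; exact dom_Ici h c
    · have hEq : U = Set.Ioi c := by
        refine Set.Subset.antisymm (fun x hx => ?_) hsub1
        rcases lt_or_eq_of_le (show c ≤ x from hsub2 hx) with h' | h'
        · exact h'
        · exact absurd (h' ▸ hx) hcU
      rw [hEq]; exact h c
  · have hEq : U = Set.univ := by
      refine Set.eq_univ_of_forall fun x => ?_
      rw [bddBelow_def] at hbdd
      push_neg at hbdd
      obtain ⟨u, huU, hux⟩ := hbdd x
      exact hU hux.le huU
    rw [hEq]; simp

lemma dom_lintegral {μ ν : Measure ℝ} [IsProbabilityMeasure μ] [IsProbabilityMeasure ν]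
    (h : ∀ x : ℝ, μ (Set.Ioi x) ≤ ν (Set.Ioi x))
    {g : ℝ → ℝ≥0∞} (hg : Monotone g) (hg1 : ∀ x, g x ≤ 1) :
    ∫⁻ x, g x ∂μ ≤ ∫⁻ x, g x ∂ν := by
  set f : ℝ → ℝ := fun x => (g x).toReal with hf
  have hgne : ∀ x, g x ≠ ∞ := fun x => (lt_of_le_of_lt (hg1 x) (by simp)).ne
  have hfmono : Monotone f := fun x y hxy =>
    ENNReal.toReal_mono (hgne y) (hg hxy)
  have hrw : ∀ x, g x = ENNReal.ofReal (f x) := fun x =>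
    (ENNReal.ofReal_toReal (hgne x)).symm
  have hnn : ∀ x, 0 ≤ f x := fun x => ENNReal.toReal_nonneg
  have key : ∀ (κ : Measure ℝ), ∫⁻ x, g x ∂κ = ∫⁻ t in Set.Ioi (0:ℝ), κ {a | t < f a} := by
    intro κ
    rw [show (fun x => g x) = fun x => ENNReal.ofReal (f x) from funext hrw]
    exact lintegral_eq_lintegral_meas_lt κ (ae_of_all _ hnn) hfmono.measurable.aemeasurable
  rw [key μ, key ν]
  refine lintegral_mono fun t => ?_
  exact dom_upper h (fun x y hxy hx => lt_of_lt_of_le hx (hfmono hxy))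

lemma insertNth_mono {n : ℕ} (i : Fin (n+1)) {x x' : ℝ} {y y' : Fin n → ℝ}
    (hx : x ≤ x') (hy : y ≤ y') : (i.insertNth x y : Fin (n+1) → ℝ) ≤ i.insertNth x' y' := by
  intro j
  refine Fin.succAboveCases i ?_ ?_ j
  · simpa using hx
  · intro k
    simpa using hy k

example {n : ℕ} (i : Fin (n+1)) (p : ℝ × (Fin n → ℝ)) :
    (MeasurableEquiv.piFinSuccAbove (fun _ : Fin (n+1) => ℝ) i).symm p = i.insertNth p.1 p.2 := by
  rfl

lemma dom_pi : ∀ (m : ℕ) (μ : Fin m → Measure ℝ) (ν : Measure ℝ),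
    (∀ i, IsProbabilityMeasure (μ i)) → IsProbabilityMeasure ν →
    (∀ i x, μ i (Set.Ioi x) ≤ ν (Set.Ioi x)) →
    ∀ (f : (Fin m → ℝ) → ℝ≥0∞), Measurable f → Monotone f → (∀ x, f x ≤ 1) →
    ∫⁻ x, f x ∂(Measure.pi μ) ≤ ∫⁻ x, f x ∂(Measure.pi fun _ => ν) := by
  intro m
  induction m with
  | zero =>
    intro μ ν hμ hν hdom f hfm hfmono hf1
    have h1 : ∀ x : Fin 0 → ℝ, f x = f (fun i => i.elim0) := fun x => by
      congr 1; funext i; exact i.elim0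
    rw [show f = fun _ => f (fun i => i.elim0) from funext h1]
    rw [lintegral_const, lintegral_const]
    have : ∀ (κ : Fin 0 → Measure ℝ), (∀ i, IsProbabilityMeasure (κ i)) →
        Measure.pi κ Set.univ = 1 := by
      intro κ hκ
      haveI := hκ
      rw [← Set.pi_univ Set.univ, Measure.pi_pi]
      simp
    rw [this μ hμ, this (fun _ => ν) (fun _ => hν)]
  | succ n ih =>
    intro μ ν hμ hν hdom f hfm hfmono hf1
    haveI := hμ; haveI := hν
    set e := MeasurableEquiv.piFinSuccAbove (fun _ : Fin (n+1) => ℝ) 0 with he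
    have hesymm : ∀ p : ℝ × (Fin n → ℝ), e.symm p = (0 : Fin (n+1)).insertNth p.1 p.2 :=
      fun p => rfl
    have hmeas_symm : Measurable (fun p : ℝ × (Fin n → ℝ) => f (e.symm p)) :=
      hfm.comp e.symm.measurable
    have key : ∀ (κ : Fin (n+1) → Measure ℝ), (∀ i, IsProbabilityMeasure (κ i)) →
        ∫⁻ x, f x ∂(Measure.pi κ) =
        ∫⁻ x, ∫⁻ y, f (e.symm (x, y)) ∂(Measure.pi fun j => κ ((0:Fin (n+1)).succAbove j)) ∂(κ 0) := by
      intro κ hκ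
      haveI := hκ
      have hmp := measurePreserving_piFinSuccAbove κ 0
      calc ∫⁻ x, f x ∂(Measure.pi κ) = ∫⁻ x, f (e.symm (e x)) ∂(Measure.pi κ) := by
            refine lintegral_congr fun x => ?_
            rw [e.symm_apply_apply]
        _ = ∫⁻ b, f (e.symm b) ∂((κ 0).prod (Measure.pi fun j => κ ((0:Fin (n+1)).succAbove j))) :=
            hmp.lintegral_comp hmeas_symm
        _ = ∫⁻ x, ∫⁻ y, f (e.symm (x, y)) ∂(Measure.pi fun j => κ ((0:Fin (n+1)).succAbove j)) ∂(κ 0) :=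
            lintegral_prod _ hmeas_symm.aemeasurable
    rw [key μ hμ, key (fun _ => ν) (fun _ => hν)]
    have step1 : ∀ x : ℝ,
        ∫⁻ y, f (e.symm (x, y)) ∂(Measure.pi fun j => μ ((0:Fin (n+1)).succAbove j)) ≤
        ∫⁻ y, f (e.symm (x, y)) ∂(Measure.pi fun _ : Fin n => ν) := by
      intro x
      refine ih (fun j => μ ((0:Fin (n+1)).succAbove j)) ν (fun j => hμ _) hν
        (fun j t => hdom _ t) _ (hmeas_symm.comp measurable_prodMk_left)
        (fun y y' hy => hfmono (by rw [hesymm, hesymm]; exact insertNth_mono 0 le_rfl hy))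
        (fun y => hf1 _)
    calc ∫⁻ x, ∫⁻ y, f (e.symm (x, y)) ∂(Measure.pi fun j => μ ((0:Fin (n+1)).succAbove j)) ∂(μ 0)
        ≤ ∫⁻ x, ∫⁻ y, f (e.symm (x, y)) ∂(Measure.pi fun _ : Fin n => ν) ∂(μ 0) :=
          lintegral_mono step1
      _ ≤ ∫⁻ x, ∫⁻ y, f (e.symm (x, y)) ∂(Measure.pi fun _ : Fin n => ν) ∂ν := by
          refine dom_lintegral (hdom 0) ?_ ?_
          · intro x x' hx
            refine lintegral_mono fun y => ?_
            exact hfmono (by rw [hesymm, hesymm]; exact insertNth_mono 0 hx le_rfl)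
          · intro x
            calc ∫⁻ y, f (e.symm (x, y)) ∂(Measure.pi fun _ : Fin n => ν)
                ≤ ∫⁻ _, 1 ∂(Measure.pi fun _ : Fin n => ν) := lintegral_mono fun y => hf1 _
              _ = 1 := by simp

lemma map_vec_eq_pi {Ω : Type*} [MeasurableSpace Ω] (P : Measure Ω) [IsProbabilityMeasure P]
    (X : ℕ → Ω → ℝ) (hm : ∀ k, Measurable (X k))
    (hi : iIndepFun X P) (M : ℕ) :
    Measure.map (fun ω (i : Fin M) => X i ω) P
      = Measure.pi (fun i : Fin M => Measure.map (X i) P) := by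
  haveI : ∀ i : Fin M, IsProbabilityMeasure (Measure.map (X i) P) :=
    fun i => Measure.isProbabilityMeasure_map (hm i).aemeasurable
  refine (Measure.pi_eq fun s hs => ?_).symm
  have hvec : Measurable (fun ω (i : Fin M) => X i ω) :=
    measurable_pi_lambda _ fun i => hm i
  rw [Measure.map_apply hvec (MeasurableSet.univ_pi hs)]
  classical
  set S : ℕ → Set ℝ := fun n => if h : n < M then s ⟨n, h⟩ else Set.univ with hS
  have hpre : (fun ω (i : Fin M) => X i ω) ⁻¹' Set.pi Set.univ s
      = ⋂ n ∈ Finset.range M, X n ⁻¹' S n := by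
    ext ω
    simp only [Set.mem_preimage, Set.mem_pi, Set.mem_univ, forall_true_left, Set.mem_iInter,
      Finset.mem_range, hS]
    constructor
    · intro h n hn
      simpa [dif_pos hn] using h ⟨n, hn⟩
    · intro h i
      have := h i.val i.isLt
      simpa [dif_pos i.isLt] using this
  rw [hpre, hi.measure_inter_preimage_eq_mul (Finset.range M)
    (fun n _ => by by_cases h : n < M <;> simp [hS, h, hs])]
  rw [← Fin.prod_univ_eq_prod_range (fun n => P (X n ⁻¹' S n)) M]
  refine Finset.prod_congr rfl fun i _ => ?_
  rw [Measure.map_apply (hm i) (hs i)]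
  congr 1
  simp [hS, i.isLt]

lemma finite_event_le {Ω : Type*} [MeasurableSpace Ω] (P : Measure Ω) [IsProbabilityMeasure P]
    (X : ℕ → Ω → ℝ) (hX_meas : ∀ k, Measurable (X k))
    (h_indep : iIndepFun X P)
    (Xstar : ℕ → Ω → ℝ) (hXs_meas : ∀ k, Measurable (Xstar k))
    (h_indep_s : iIndepFun Xstar P)
    (h_ident : ∀ k, Measure.map (Xstar k) P = Measure.map (Xstar 0) P)
    (h_tail : ∀ k x, P {ω | x < Xstar k ω} = ⨆ n, P {ω | x < X n ω})
    (a : ℕ → ℝ) (N M : ℕ) :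
    P {ω | ∃ n ∈ Finset.Icc N M, a n < ∑ k ∈ Finset.range n, X k ω}
      ≤ P {ω | ∃ n ∈ Finset.Icc N M, a n < ∑ k ∈ Finset.range n, Xstar k ω} := by
  classical
  set M' := M + 1 with hM'
  set D : Set (Fin M' → ℝ) :=
    {x | ∃ n ∈ Finset.Icc N M, a n < ∑ k ∈ Finset.range n,
      (if h : k < M' then x ⟨k, h⟩ else 0)} with hD
  have hpre : ∀ (Y : ℕ → Ω → ℝ),
      {ω | ∃ n ∈ Finset.Icc N M, a n < ∑ k ∈ Finset.range n, Y k ω}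
        = (fun ω (i : Fin M') => Y i ω) ⁻¹' D := by
    intro Y
    ext ω
    simp only [Set.mem_setOf_eq, Set.mem_preimage, hD]
    refine exists_congr fun n => and_congr_right fun hn => ?_
    have hnM : n ≤ M := (Finset.mem_Icc.mp hn).2
    have : ∀ k ∈ Finset.range n,
        (if h : k < M' then Y (⟨k, h⟩ : Fin M').val ω else 0) = Y k ω := by
      intro k hk
      have hk' : k < M' := lt_of_lt_of_le (Finset.mem_range.mp hk) (by omega)
      simp [dif_pos hk']
    rw [Finset.sum_congr rfl this]
  have hgmeas : ∀ n : ℕ, Measurable (fun x : Fin M' → ℝ =>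
      ∑ k ∈ Finset.range n, (if h : k < M' then x ⟨k, h⟩ else 0)) := by
    intro n
    refine Finset.measurable_sum _ fun k _ => ?_
    by_cases h : k < M'
    · simpa [dif_pos h] using measurable_pi_apply (⟨k, h⟩ : Fin M')
    · simpa [dif_neg h] using measurable_const
  have hDmeas : MeasurableSet D := by
    have : D = ⋃ n ∈ Finset.Icc N M, {x : Fin M' → ℝ | a n < ∑ k ∈ Finset.range n,
        (if h : k < M' then x ⟨k, h⟩ else 0)} := by
      ext x; simp [hD]
    rw [this]
    exact MeasurableSet.biUnion (Finset.Icc N M).countable_toSet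
      (fun n _ => measurableSet_lt measurable_const (hgmeas n))
  have hDupper : ∀ ⦃x y : Fin M' → ℝ⦄, x ≤ y → x ∈ D → y ∈ D := by
    intro x y hxy ⟨n, hn, hlt⟩
    refine ⟨n, hn, lt_of_lt_of_le hlt ?_⟩
    refine Finset.sum_le_sum fun k _ => ?_
    by_cases h : k < M'
    · simpa [dif_pos h] using hxy ⟨k, h⟩
    · simp [dif_neg h]
  -- indicator function
  set f : (Fin M' → ℝ) → ℝ≥0∞ := D.indicator 1 with hf
  have hfm : Measurable f := measurable_one.indicator hDmeas
  have hfmono : Monotone f := by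
    intro x y hxy
    by_cases hx : x ∈ D
    · rw [hf, Set.indicator_of_mem hx, Set.indicator_of_mem (hDupper hxy hx)]
      rfl
    · simp [hf, Set.indicator_of_notMem hx]
  have hf1 : ∀ x, f x ≤ 1 := fun x => Set.indicator_le_self' (by simp) x
  set ν : Measure ℝ := Measure.map (Xstar 0) P with hν
  haveI : IsProbabilityMeasure ν := Measure.isProbabilityMeasure_map (hXs_meas 0).aemeasurable
  haveI : ∀ i : Fin M', IsProbabilityMeasure (Measure.map (X i) P) :=
    fun i => Measure.isProbabilityMeasure_map (hX_meas i).aemeasurable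
  have hdom : ∀ (i : Fin M') (x : ℝ), Measure.map (X i) P (Set.Ioi x) ≤ ν (Set.Ioi x) := by
    intro i x
    rw [Measure.map_apply (hX_meas i) measurableSet_Ioi,
      Measure.map_apply (hXs_meas 0) measurableSet_Ioi]
    have h1 : X i ⁻¹' Set.Ioi x = {ω | x < X i ω} := rfl
    have h2 : Xstar 0 ⁻¹' Set.Ioi x = {ω | x < Xstar 0 ω} := rfl
    rw [h1, h2, h_tail 0 x]
    exact le_iSup (fun n => P {ω | x < X n ω}) i.val
  have hmapX := map_vec_eq_pi P X hX_meas h_indep M'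
  have hmapXs := map_vec_eq_pi P Xstar hXs_meas h_indep_s M'
  have hpis : Measure.pi (fun i : Fin M' => Measure.map (Xstar i) P)
      = Measure.pi (fun _ : Fin M' => ν) := by
    congr 1
    funext i
    exact h_ident i
  have hvecX : Measurable (fun ω (i : Fin M') => X i ω) :=
    measurable_pi_lambda _ fun i => hX_meas i
  have hvecXs : Measurable (fun ω (i : Fin M') => Xstar i ω) :=
    measurable_pi_lambda _ fun i => hXs_meas i
  calc P {ω | ∃ n ∈ Finset.Icc N M, a n < ∑ k ∈ Finset.range n, X k ω}
      = Measure.pi (fun i : Fin M' => Measure.map (X i) P) D := by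
        rw [hpre X, ← Measure.map_apply hvecX hDmeas, hmapX]
    _ = ∫⁻ x, f x ∂(Measure.pi (fun i : Fin M' => Measure.map (X i) P)) := by
        rw [hf, lintegral_indicator_one hDmeas]
    _ ≤ ∫⁻ x, f x ∂(Measure.pi (fun _ : Fin M' => ν)) :=
        dom_pi M' _ ν inferInstance inferInstance hdom f hfm hfmono hf1
    _ = Measure.pi (fun _ : Fin M' => ν) D := by
        rw [hf, lintegral_indicator_one hDmeas]
    _ = P {ω | ∃ n ∈ Finset.Icc N M, a n < ∑ k ∈ Finset.range n, Xstar k ω} := by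
        rw [hpre Xstar, ← Measure.map_apply hvecXs hDmeas, hmapXs, hpis]

theorem stmt4
    {Ω : Type*} [MeasurableSpace Ω] (P : Measure Ω) [IsProbabilityMeasure P]
    (X : ℕ → Ω → ℝ) (hX_meas : ∀ k, Measurable (X k)) (hX_nonneg : ∀ k ω, 0 ≤ X k ω)
    (h_indep : iIndepFun X P)
    (a : ℕ → ℝ) (ha_mono : Monotone a)
    (ha_div : Tendsto (fun k : ℕ => a k / k) atTop atTop)
    (h_sum : ∑' k : ℕ, ⨆ n, P {ω | a k < X n ω} < ∞)
    (k₀ : ℕ) (h_inf : ∫⁻ ω, ENNReal.ofReal (X k₀ ω) ∂P = ∞)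
    (Xstar : ℕ → Ω → ℝ) (hXs_meas : ∀ k, Measurable (Xstar k))
    (hXs_nonneg : ∀ k ω, 0 ≤ Xstar k ω)
    (h_indep_s : iIndepFun Xstar P)
    (h_ident : ∀ k, Measure.map (Xstar k) P = Measure.map (Xstar 0) P)
    (h_tail : ∀ k x, P {ω | x < Xstar k ω} = ⨆ n, P {ω | x < X n ω}) :
    (∫⁻ ω, ENNReal.ofReal (Xstar 0 ω) ∂P = ∞) ∧
    (∑' k : ℕ, P {ω | a k < Xstar k ω} < ∞) ∧
    P {ω | ∃ᶠ n in atTop, a n < ∑ k ∈ Finset.range n, X k ω}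
      ≤ P {ω | ∃ᶠ n in atTop, a n < ∑ k ∈ Finset.range n, Xstar k ω} := by
  refine ⟨?_, ?_, ?_⟩
  · -- part 1
    rw [lintegral_eq_lintegral_meas_lt P (ae_of_all _ (hXs_nonneg 0)) (hXs_meas 0).aemeasurable]
    rw [lintegral_eq_lintegral_meas_lt P (ae_of_all _ (hX_nonneg k₀)) (hX_meas k₀).aemeasurable]
      at h_inf
    refine top_unique ?_
    rw [← h_inf]
    refine lintegral_mono fun t => ?_
    rw [h_tail 0 t]
    exact le_iSup (fun n => P {ω | t < X n ω}) k₀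
  · -- part 2
    calc ∑' k : ℕ, P {ω | a k < Xstar k ω} = ∑' k : ℕ, ⨆ n, P {ω | a k < X n ω} :=
          tsum_congr fun k => h_tail k (a k)
      _ < ∞ := h_sum
  · -- part 3
    set C : (ℕ → Ω → ℝ) → ℕ → ℕ → Set Ω := fun Y N M =>
      {ω | ∃ n ∈ Finset.Icc N M, a n < ∑ k ∈ Finset.range n, Y k ω} with hC
    have hAeq : ∀ Y : ℕ → Ω → ℝ,
        {ω | ∃ᶠ n in atTop, a n < ∑ k ∈ Finset.range n, Y k ω} = ⋂ N, ⋃ M, C Y N M := by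
      intro Y
      ext ω
      simp only [Set.mem_setOf_eq, Set.mem_iInter, Set.mem_iUnion, frequently_atTop, hC,
        Finset.mem_Icc]
      constructor
      · intro h N
        obtain ⟨n, hn, hlt⟩ := h N
        exact ⟨n, n, ⟨hn, le_rfl⟩, hlt⟩
      · intro h N
        obtain ⟨M, n, ⟨hn, _⟩, hlt⟩ := h N
        exact ⟨n, hn, hlt⟩
    have hmono : ∀ (Y : ℕ → Ω → ℝ) (N : ℕ), Monotone (C Y N) := by
      intro Y N M M' hMM' ω ⟨n, hn, hlt⟩
      exact ⟨n, Finset.Icc_subset_Icc_right hMM' hn, hlt⟩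
    have hCmeas : ∀ N M, MeasurableSet (C Xstar N M) := by
      intro N M
      have : C Xstar N M = ⋃ n ∈ Finset.Icc N M,
          {ω | a n < ∑ k ∈ Finset.range n, Xstar k ω} := by
        ext ω; simp [hC]
      rw [this]
      exact MeasurableSet.biUnion (Finset.Icc N M).countable_toSet fun n _ =>
        measurableSet_lt measurable_const (Finset.measurable_sum _ fun k _ => hXs_meas k)
    have hanti : Antitone (fun N => ⋃ M, C Xstar N M) := by
      intro N N' hNN'
      refine Set.iUnion_mono fun M => ?_
      intro ω ⟨n, hn, hlt⟩
      exact ⟨n, Finset.Icc_subset_Icc_left hNN' hn, hlt⟩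
    calc P {ω | ∃ᶠ n in atTop, a n < ∑ k ∈ Finset.range n, X k ω}
        ≤ ⨅ N, P (⋃ M, C X N M) := by
          rw [hAeq X]
          exact le_iInf fun N => measure_mono (Set.iInter_subset _ N)
      _ ≤ ⨅ N, P (⋃ M, C Xstar N M) := by
          refine iInf_mono fun N => ?_
          rw [(hmono X N).measure_iUnion, (hmono Xstar N).measure_iUnion]
          exact iSup_mono fun M => finite_event_le P X hX_meas h_indep Xstar hXs_meas
            h_indep_s h_ident h_tail a N M
      _ = P (⋂ N, ⋃ M, C Xstar N M) :=
          (hanti.measure_iInter (fun N => (MeasurableSet.iUnion fun M =>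
            hCmeas N M).nullMeasurableSet) ⟨0, measure_ne_top P _⟩).symm
      _ = P {ω | ∃ᶠ n in atTop, a n < ∑ k ∈ Finset.range n, Xstar k ω} := by
          rw [hAeq Xstar]
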